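/- Let S be a closed symmetric operator with non-dense domain in a complex Hilbert space H, set H₀ := closure(dom S) and L := H₀^⊥, and assume S is regular, so that the subspaces L_i := P_{N_i}L ⊆ N_i and L_{−i} := P_{N_{−i}}L ⊆ N_{−i} are closed, where N_{±i} := (ran(S ∓ iI))^⊥ are the deficiency subspaces. Let U : N_i → N_{−i} be a bounded linear map. Then for φ ∈ N_i one has φ − Uφ ∈ H₀ if and only if there exists h ∈ L such that P_{N_i}h = P_{L_i}φ and P_{N_{−i}}h = P_{L_{−i}}(Uφ). (Here P_{L_{±i}} denote the orthogonal projections onto L_{±i}; this says {φ ∈ N_i : (U − I)φ ∈ H₀} = ker(P_{L_{−i}}U − V_iP_{L_i}), where V_i is the isometry of L_i onto L_{−i} determined by V_i(P_{N_i}h) = P_{N_{−i}}h for h ∈ L.) -/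

import Mathlib

set_option maxHeartbeats 1000000
set_option linter.unusedSectionVars false


set_option synthInstance.maxHeartbeats 1000000

open scoped ComplexInnerProductSpace

variable {H : Type*} [NormedAddCommGroup H] [InnerProductSpace ℂ H] [CompleteSpace H]

/-- The compression of an operator `T` in `H` to a closed subspace `K`: the operator in the
Hilbert space `K` with domain `dom T ∩ K` acting as `x ↦ P_K (T x)`. -/
noncomputable def compression (K : Submodule ℂ H) [CompleteSpace K] (T : H →ₗ.[ℂ] H) :
    (↥K) →ₗ.[ℂ] (↥K) where
  domain := T.domain.comap K.subtype
  toFun := (Submodule.orthogonalProjectionOnto K).toLinearMap ∘ₗ T.toFun ∘ₗ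
    ((K.subtype.domRestrict (T.domain.comap K.subtype)).codRestrict T.domain fun x => x.2)

/-- The deficiency subspace `N_λ = (ran (S - λ̄ I))ᗮ` of an operator `S`; in particular
`defSubspace S i = N_i` and `defSubspace S (-i) = N_{-i}`. -/
noncomputable abbrev defSubspace (S : H →ₗ.[ℂ] H) (lam : ℂ) : Submodule ℂ H :=
  (LinearMap.range (S.toFun - (starRingEnd ℂ lam) • S.domain.subtype))ᗮ

/-- `opA S lam = S - conj(lam) • I`, the map whose range's complement is `defSubspace S lam`. -/
noncomputable def opA (S : H →ₗ.[ℂ] H) (lam : ℂ) : ↥S.domain →ₗ[ℂ] H :=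
  S.toFun - (starRingEnd ℂ lam) • S.domain.subtype

lemma opA_I_apply (S : H →ₗ.[ℂ] H) (x : S.domain) :
    opA S Complex.I x = S x + Complex.I • (x : H) := by
  simp only [opA, LinearMap.sub_apply, LinearMap.smul_apply, Submodule.subtype_apply,
    Complex.conj_I, neg_smul, sub_neg_eq_add]
  rfl

lemma opA_negI_apply (S : H →ₗ.[ℂ] H) (x : S.domain) :
    opA S (-Complex.I) x = S x - Complex.I • (x : H) := by
  simp only [opA, LinearMap.sub_apply, LinearMap.smul_apply, Submodule.subtype_apply,
    map_neg, Complex.conj_I, neg_neg]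
  rfl

lemma opA_norm_sq (S : H →ₗ.[ℂ] H)
    (hsym : ∀ x y : S.domain, ⟪S x, (y : H)⟫ = ⟪(x : H), S y⟫)
    (lam : ℂ) (hlam : lam = Complex.I ∨ lam = -Complex.I) (x : S.domain) :
    ‖opA S lam x‖ ^ 2 = ‖S x‖ ^ 2 + ‖(x : H)‖ ^ 2 := by
  have hr : (starRingEnd ℂ) ⟪S x, (x : H)⟫ = ⟪S x, (x : H)⟫ := by
    rw [inner_conj_symm, hsym x x]
  have him : (⟪S x, (x : H)⟫).im = 0 := by
    have := congrArg Complex.im hr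
    simp only [Complex.conj_im] at this
    linarith
  rcases hlam with h | h <;> subst h
  · rw [opA_I_apply]
    rw [@norm_add_sq ℂ, inner_smul_right, norm_smul]
    simp [Complex.mul_re, him]
  · rw [opA_negI_apply, sub_eq_add_neg, ← neg_smul]
    rw [@norm_add_sq ℂ, inner_smul_right, norm_smul]
    simp [Complex.mul_re, him]

lemma opA_norm_le (S : H →ₗ.[ℂ] H)
    (hsym : ∀ x y : S.domain, ⟪S x, (y : H)⟫ = ⟪(x : H), S y⟫)
    (lam : ℂ) (hlam : lam = Complex.I ∨ lam = -Complex.I) (x : S.domain) :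
    ‖(x : H)‖ ≤ ‖opA S lam x‖ := by
  have h := opA_norm_sq S hsym lam hlam x
  nlinarith [norm_nonneg (opA S lam x), norm_nonneg (S x), norm_nonneg ((x : H))]

lemma opA_range_closed (S : H →ₗ.[ℂ] H)
    (hsym : ∀ x y : S.domain, ⟪S x, (y : H)⟫ = ⟪(x : H), S y⟫)
    (hclosed : S.IsClosed)
    (lam : ℂ) (hlam : lam = Complex.I ∨ lam = -Complex.I) :
    IsClosed ((LinearMap.range (opA S lam) : Submodule ℂ H) : Set H) := by
  have hclosed' : _root_.IsClosed (S.graph : Set (H × H)) := hclosed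
  set c : ℂ := -(starRingEnd ℂ) lam with hc
  have happ : ∀ x : S.domain, opA S lam x = S x + c • (x : H) := by
    intro x
    simp only [opA, LinearMap.sub_apply, LinearMap.smul_apply, Submodule.subtype_apply, hc,
      neg_smul, sub_eq_add_neg]
    rfl
  apply IsSeqClosed.isClosed
  intro f y hf hy
  choose u hu using hf
  have hfc : CauchySeq f := hy.cauchySeq
  have hucauchy : CauchySeq fun n => ((u n : H)) := by
    rw [Metric.cauchySeq_iff] at hfc ⊢
    intro ε hε
    obtain ⟨N, hN⟩ := hfc ε hε
    refine ⟨N, fun m hm n hn => ?_⟩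
    have hd := hN m hm n hn
    rw [dist_eq_norm] at hd ⊢
    calc ‖(u m : H) - (u n : H)‖ = ‖((u m - u n : S.domain) : H)‖ := by push_cast; ring_nf
    _ ≤ ‖opA S lam (u m - u n)‖ := opA_norm_le S hsym lam hlam _
    _ = ‖f m - f n‖ := by rw [map_sub, hu, hu]
    _ < ε := hd
  obtain ⟨x₀, hx₀⟩ := cauchySeq_tendsto_of_complete hucauchy
  have hSu : Filter.Tendsto (fun n => S (u n)) Filter.atTop (nhds (y - c • x₀)) := by
    have heq : (fun n => S (u n)) = fun n => f n - c • ((u n : H)) := by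
      funext n
      rw [← hu n, happ]
      abel
    rw [heq]
    exact hy.sub (hx₀.const_smul c)
  have hgraph : (x₀, y - c • x₀) ∈ S.graph := by
    have htend : Filter.Tendsto (fun n => (((u n : H)), S (u n))) Filter.atTop
        (nhds (x₀, y - c • x₀)) := hx₀.prodMk_nhds hSu
    exact hclosed'.mem_of_tendsto htend
      (Filter.Eventually.of_forall fun n => S.mem_graph (u n))
  rw [LinearPMap.mem_graph_iff] at hgraph
  obtain ⟨x', hx'1, hx'2⟩ := hgraph
  refine ⟨x', ?_⟩
  rw [happ, hx'2, hx'1]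
  simp

lemma projR {E : Type*} [NormedAddCommGroup E] [InnerProductSpace ℂ E]
    (K : Submodule ℂ E) [CompleteSpace K] {v : E} (hv : v ∈ K) (h : E) :
    ⟪v, h⟫ = ⟪v, (Submodule.orthogonalProjectionOnto K h : E)⟫ := by
  have h0 : ⟪v, h - (Submodule.orthogonalProjectionOnto K h : E)⟫ = 0 :=
    Submodule.inner_right_of_mem_orthogonal hv (Submodule.sub_starProjection_mem_orthogonal h)
  rw [inner_sub_right] at h0
  exact sub_eq_zero.mp h0

lemma projL {E : Type*} [NormedAddCommGroup E] [InnerProductSpace ℂ E]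
    (K : Submodule ℂ E) [CompleteSpace K] {v : E} (hv : v ∈ K) (h : E) :
    ⟪h, v⟫ = ⟪(Submodule.orthogonalProjectionOnto K h : E), v⟫ := by
  rw [← inner_conj_symm, projR K hv h, inner_conj_symm]

lemma key_inner (S : H →ₗ.[ℂ] H)
    (hsym : ∀ x y : S.domain, ⟪S x, (y : H)⟫ = ⟪(x : H), S y⟫)
    (hclosed : S.IsClosed)
    {h h' : H} (hh : h ∈ S.domainᗮ) (hh' : h' ∈ S.domainᗮ) :
    ⟪h', ((Submodule.orthogonalProjectionOnto (defSubspace S Complex.I)) h : H)⟫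
      = ⟪h', ((Submodule.orthogonalProjectionOnto (defSubspace S (-Complex.I))) h : H)⟫ := by
  -- obtain preimages of the projections onto the ranges
  have hgetx : ∀ lam : ℂ, lam = Complex.I ∨ lam = -Complex.I →
      ∃ x : S.domain, opA S lam x = h - ((Submodule.orthogonalProjectionOnto (defSubspace S lam)) h : H) := by
    intro lam hlam
    haveI := (opA_range_closed S hsym hclosed lam hlam).completeSpace_coe
    have hmem := Submodule.sub_starProjection_mem_orthogonal (K := defSubspace S lam) h
    have horth : ((LinearMap.range (opA S lam))ᗮ)ᗮ = LinearMap.range (opA S lam) :=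
      Submodule.orthogonal_orthogonal _
    have hmem' : h - ((Submodule.orthogonalProjectionOnto (defSubspace S lam)) h : H) ∈
        ((LinearMap.range (opA S lam))ᗮ)ᗮ := hmem
    rw [horth] at hmem'
    exact hmem'
  obtain ⟨x, hx⟩ := hgetx Complex.I (Or.inl rfl)
  obtain ⟨z, hz⟩ := hgetx (-Complex.I) (Or.inr rfl)
  -- the two inner-product identities
  have claim : ∀ lam : ℂ, lam = Complex.I ∨ lam = -Complex.I → ∀ w : S.domain,
      opA S lam w = h - ((Submodule.orthogonalProjectionOnto (defSubspace S lam)) h : H) →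
      ∀ y : S.domain, ⟪S w, S y⟫ + ⟪(w : H), (y : H)⟫ = ⟪h, S y⟫ := by
    intro lam hlam w hw y
    have e0 : ⟪(((Submodule.orthogonalProjectionOnto (defSubspace S lam)) h : H)), opA S lam y⟫ = 0 := by
      have hmemNi : (((Submodule.orthogonalProjectionOnto (defSubspace S lam)) h : H)) ∈
          (LinearMap.range (opA S lam))ᗮ := Submodule.coe_mem _
      exact (Submodule.mem_orthogonal' _ _).mp hmemNi _ ⟨y, rfl⟩
    have e1 : ⟪opA S lam w, opA S lam y⟫ = ⟪h, opA S lam y⟫ := by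
      rw [hw, inner_sub_left, e0, sub_zero]
    have hhy : ⟪h, (y : H)⟫ = 0 := (Submodule.mem_orthogonal' _ _).mp hh _ y.2
    rcases hlam with h' | h' <;> subst h'
    · rw [opA_I_apply, opA_I_apply] at e1
      simp only [inner_add_left, inner_add_right, inner_smul_left, inner_smul_right,
        Complex.conj_I] at e1
      linear_combination e1 - Complex.I * hsym w y +
        (inner ℂ (w : H) (y : H) : ℂ) * Complex.I_mul_I + Complex.I * hhy
    · rw [opA_negI_apply, opA_negI_apply] at e1
      simp only [inner_sub_left, inner_sub_right, inner_smul_left, inner_smul_right,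
        Complex.conj_I] at e1
      linear_combination e1 + Complex.I * hsym w y +
        (inner ℂ (w : H) (y : H) : ℂ) * Complex.I_mul_I - Complex.I * hhy
  -- conclude x = z
  have hxz : (x : H) = (z : H) := by
    have hcomb : ∀ y : S.domain, ⟪S x - S z, S y⟫ + ⟪(x : H) - (z : H), (y : H)⟫ = 0 := by
      intro y
      have c1 := claim Complex.I (Or.inl rfl) x hx y
      have c2 := claim (-Complex.I) (Or.inr rfl) z hz y
      rw [inner_sub_left, inner_sub_left]
      linear_combination c1 - c2
    have h0 := hcomb (x - z)
    rw [LinearPMap.map_sub, Submodule.coe_sub] at h0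
    have hre : RCLike.re (⟪S x - S z, S x - S z⟫ +
        ⟪(x : H) - (z : H), (x : H) - (z : H)⟫) = 0 := by rw [h0]; simp
    rw [map_add, inner_self_eq_norm_sq, inner_self_eq_norm_sq] at hre
    have h2 : ‖(x : H) - (z : H)‖ = 0 := by nlinarith [sq_nonneg ‖S x - S z‖]
    exact sub_eq_zero.mp (norm_eq_zero.mp h2)
  have hxz' : x = z := Subtype.ext hxz
  -- the difference of the two projections lies in the domain
  have hdiff : ((Submodule.orthogonalProjectionOnto (defSubspace S Complex.I)) h : H) -
      ((Submodule.orthogonalProjectionOnto (defSubspace S (-Complex.I))) h : H) = (-(2 * Complex.I)) • (x : H) := by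
    have e1 : ((Submodule.orthogonalProjectionOnto (defSubspace S Complex.I)) h : H) = h - opA S Complex.I x := by
      rw [hx, sub_sub_cancel]
    have e2 : ((Submodule.orthogonalProjectionOnto (defSubspace S (-Complex.I))) h : H)
        = h - opA S (-Complex.I) z := by
      rw [hz, sub_sub_cancel]
    rw [e1, e2, ← hxz', opA_I_apply, opA_negI_apply]
    module
  have hz0 : ⟪h', ((Submodule.orthogonalProjectionOnto (defSubspace S Complex.I)) h : H) -
      ((Submodule.orthogonalProjectionOnto (defSubspace S (-Complex.I))) h : H)⟫ = 0 := by
    rw [hdiff, inner_smul_right, (Submodule.mem_orthogonal' _ _).mp hh' _ x.2, mul_zero]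
  rw [inner_sub_right] at hz0
  exact sub_eq_zero.mp hz0

lemma master (S : H →ₗ.[ℂ] H)
    (hsym : ∀ x y : S.domain, ⟪S x, (y : H)⟫ = ⟪(x : H), S y⟫)
    (hclosed : S.IsClosed)
    (Li : Submodule ℂ ↥(defSubspace S Complex.I)) [CompleteSpace Li]
    (hLi : Li = Submodule.map (Submodule.orthogonalProjectionOnto (defSubspace S Complex.I) :
      H →ₗ[ℂ] ↥(defSubspace S Complex.I)) S.domainᗮ)
    (Lmi : Submodule ℂ ↥(defSubspace S (-Complex.I))) [CompleteSpace Lmi]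
    (hLmi : Lmi = Submodule.map (Submodule.orthogonalProjectionOnto (defSubspace S (-Complex.I)) :
      H →ₗ[ℂ] ↥(defSubspace S (-Complex.I))) S.domainᗮ)
    (ψ : ↥(defSubspace S Complex.I)) (χ : ↥(defSubspace S (-Complex.I)))
    {h h₀ : H} (hh : h ∈ S.domainᗮ) (hh₀ : h₀ ∈ S.domainᗮ)
    (h1 : Submodule.orthogonalProjectionOnto (defSubspace S Complex.I) h₀ =
      (Submodule.orthogonalProjectionOnto Li ψ : ↥(defSubspace S Complex.I))) :
    ⟪h, (ψ : H)⟫ - ⟪h, (χ : H)⟫ =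
      ⟪((Submodule.orthogonalProjectionOnto (defSubspace S (-Complex.I))) h : H),
        ((Submodule.orthogonalProjectionOnto (defSubspace S (-Complex.I))) h₀ : H) -
          ((Submodule.orthogonalProjectionOnto Lmi χ : ↥(defSubspace S (-Complex.I))) : H)⟫ := by
  have hmemLi : Submodule.orthogonalProjectionOnto (defSubspace S Complex.I) h ∈ Li := by
    rw [hLi]; exact Submodule.mem_map_of_mem hh
  have hmemLmi : Submodule.orthogonalProjectionOnto (defSubspace S (-Complex.I)) h ∈ Lmi := by
    rw [hLmi]; exact Submodule.mem_map_of_mem hh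
  have eA : ⟪h, (ψ : H)⟫ =
      ⟪((Submodule.orthogonalProjectionOnto (defSubspace S (-Complex.I))) h : H),
        ((Submodule.orthogonalProjectionOnto (defSubspace S (-Complex.I))) h₀ : H)⟫ := by
    rw [projL (defSubspace S Complex.I) ψ.2 h]
    have s2 := projR Li hmemLi ψ
    rw [Submodule.coe_inner, Submodule.coe_inner] at s2
    rw [s2, ← h1]
    have s4 := projR (defSubspace S Complex.I)
      (Submodule.coe_mem (Submodule.orthogonalProjectionOnto (defSubspace S Complex.I) h)) h₀
    rw [← s4]
    have s5 := key_inner S hsym hclosed hh hh₀ (h' := h₀)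
    have s5' : ⟪((Submodule.orthogonalProjectionOnto (defSubspace S Complex.I)) h : H), h₀⟫ =
        ⟪((Submodule.orthogonalProjectionOnto (defSubspace S (-Complex.I))) h : H), h₀⟫ := by
      rw [← inner_conj_symm, s5, inner_conj_symm]
    rw [s5']
    exact projR (defSubspace S (-Complex.I))
      (Submodule.coe_mem (Submodule.orthogonalProjectionOnto (defSubspace S (-Complex.I)) h)) h₀
  have eB : ⟪h, (χ : H)⟫ =
      ⟪((Submodule.orthogonalProjectionOnto (defSubspace S (-Complex.I))) h : H),
        ((Submodule.orthogonalProjectionOnto Lmi χ : ↥(defSubspace S (-Complex.I))) : H)⟫ := by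
    rw [projL (defSubspace S (-Complex.I)) χ.2 h]
    have s2 := projR Lmi hmemLmi χ
    rw [Submodule.coe_inner, Submodule.coe_inner] at s2
    exact s2
  rw [inner_sub_right, eA, eB]

/-- Let `S` be a regular closed symmetric operator with non-dense domain,
`H₀ = closure (dom S)`, `L = H₀ᗮ`, and let `L_i = P_{N_i}L`, `L_{-i} = P_{N_{-i}}L` (closed by
regularity).  For a bounded operator `U : N_i → N_{-i}` and `φ ∈ N_i` one has
`φ - Uφ ∈ H₀` iff there exists `h ∈ L` with `P_{N_i} h = P_{L_i} φ` and
`P_{N_{-i}} h = P_{L_{-i}} (Uφ)`. -/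
theorem sub_mem_closure_domain_iff_exists_proj_eq
    (S : H →ₗ.[ℂ] H)
    (hsym : ∀ x y : S.domain, ⟪S x, (y : H)⟫ = ⟪(x : H), S y⟫)
    (hclosed : S.IsClosed)
    (hnd : ¬ Dense (S.domain : Set H))
    (hreg : (compression S.domain.topologicalClosure S).IsClosed)
    (U : ↥(defSubspace S Complex.I) →L[ℂ] ↥(defSubspace S (-Complex.I)))
    (Li : Submodule ℂ ↥(defSubspace S Complex.I)) [CompleteSpace Li]
    (hLi : Li = Submodule.map (Submodule.orthogonalProjectionOnto (defSubspace S Complex.I) :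
      H →ₗ[ℂ] ↥(defSubspace S Complex.I)) S.domainᗮ)
    (Lmi : Submodule ℂ ↥(defSubspace S (-Complex.I))) [CompleteSpace Lmi]
    (hLmi : Lmi = Submodule.map (Submodule.orthogonalProjectionOnto (defSubspace S (-Complex.I)) :
      H →ₗ[ℂ] ↥(defSubspace S (-Complex.I))) S.domainᗮ)
    (φ : ↥(defSubspace S Complex.I)) :
    (φ : H) - (U φ : H) ∈ S.domain.topologicalClosure ↔
      ∃ h ∈ S.domainᗮ,
        Submodule.orthogonalProjectionOnto (defSubspace S Complex.I) h =
          (Submodule.orthogonalProjectionOnto Li φ : ↥(defSubspace S Complex.I)) ∧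
        Submodule.orthogonalProjectionOnto (defSubspace S (-Complex.I)) h =
          (Submodule.orthogonalProjectionOnto Lmi (U φ) : ↥(defSubspace S (-Complex.I))) := by
  constructor
  · intro hmem
    rw [← Submodule.orthogonal_orthogonal_eq_closure] at hmem
    have hA : ∀ g ∈ S.domainᗮ,
        ⟪g, (φ : H)⟫ - ⟪g, ((U φ : ↥(defSubspace S (-Complex.I))) : H)⟫ = 0 := by
      intro g hg
      have h0 := (Submodule.mem_orthogonal _ _).mp hmem g hg
      rw [inner_sub_right] at h0
      exact h0
    have hmemLi : (Submodule.orthogonalProjectionOnto Li φ : ↥(defSubspace S Complex.I)) ∈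
        Submodule.map (Submodule.orthogonalProjectionOnto (defSubspace S Complex.I) :
          H →ₗ[ℂ] ↥(defSubspace S Complex.I)) S.domainᗮ := by
      rw [← hLi]; exact Submodule.coe_mem _
    obtain ⟨h₁, hh₁, hproj1⟩ := hmemLi
    refine ⟨h₁, hh₁, hproj1, ?_⟩
    have hdmem : Submodule.orthogonalProjectionOnto (defSubspace S (-Complex.I)) h₁ -
        (Submodule.orthogonalProjectionOnto Lmi (U φ) : ↥(defSubspace S (-Complex.I))) ∈ Lmi := by
      apply Submodule.sub_mem
      · rw [hLmi]; exact Submodule.mem_map_of_mem hh₁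
      · exact Submodule.coe_mem _
    have hdorth : ∀ u ∈ Lmi, ⟪u, Submodule.orthogonalProjectionOnto (defSubspace S (-Complex.I)) h₁ -
        (Submodule.orthogonalProjectionOnto Lmi (U φ) : ↥(defSubspace S (-Complex.I)))⟫ = 0 := by
      intro u hu
      rw [hLmi] at hu
      obtain ⟨g, hg, rfl⟩ := hu
      have hm := master S hsym hclosed Li hLi Lmi hLmi φ (U φ) hg hh₁ hproj1
      rw [hA g hg] at hm
      rw [Submodule.coe_inner, AddSubgroupClass.coe_sub]
      exact hm.symm
    have hd0 := inner_self_eq_zero.mp (hdorth _ hdmem)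
    exact sub_eq_zero.mp hd0
  · rintro ⟨h₀, hh₀, h1, h2⟩
    rw [← Submodule.orthogonal_orthogonal_eq_closure]
    rw [Submodule.mem_orthogonal]
    intro g hg
    have hm := master S hsym hclosed Li hLi Lmi hLmi φ (U φ) hg hh₀ h1
    have h2' : ((Submodule.orthogonalProjectionOnto (defSubspace S (-Complex.I))) h₀ : H) =
        ((Submodule.orthogonalProjectionOnto Lmi (U φ) : ↥(defSubspace S (-Complex.I))) : H) := by rw [h2]
    rw [h2', sub_self, inner_zero_right] at hm
    rw [inner_sub_right]
    exact hm
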